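/- Let C ⊆ ℕ^p be an integer cone, ⪯ an admissible total order on ℕ^p, let g and n be positive integers, and suppose f ∈ C \ {0} satisfies N(f) = g + n − 1. Then a C-semigroup S satisfies g(S) = g and n(S) = n if and only if Fb(S) = f and g(S) = g. -/
import Mathlib


open Set BigOperators

/-- `C` is an integer cone: the intersection with `ℕ^p` of the set of nonnegative
real linear combinations of a finite set `A ⊆ ℕ^p`. -/
def IsIntegerCone (p : ℕ) (C : Set (Fin p → ℕ)) : Prop :=
  ∃ A : Finset (Fin p → ℕ),
    C = {x : Fin p → ℕ | ∃ l : (Fin p → ℕ) → ℝ,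
      (∀ a, 0 ≤ l a) ∧ ∀ i, (x i : ℝ) = ∑ a ∈ A, l a * (a i : ℝ)}

/-- An admissible total order on `ℕ^p`: total, compatible with addition,
with `0` minimum, and with finite down-sets. -/
structure AdmissibleOrder (p : ℕ) where
  le : (Fin p → ℕ) → (Fin p → ℕ) → Prop
  le_refl : ∀ x, le x x
  le_antisymm : ∀ x y, le x y → le y x → x = y
  le_trans : ∀ x y z, le x y → le y z → le x z
  le_total : ∀ x y, le x y ∨ le y x
  add_right : ∀ x y z, le x y → le (x + z) (y + z)
  zero_le : ∀ x, le 0 x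
  finite_le : ∀ f, {x : Fin p → ℕ | le x f}.Finite

/-- Strict version of an admissible order. -/
def AdmissibleOrder.lt {p : ℕ} (O : AdmissibleOrder p) (x y : Fin p → ℕ) : Prop :=
  O.le x y ∧ x ≠ y

/-- `S` is a `C`-semigroup: a submonoid of `ℕ^p` contained in `C` with finite complement in `C`. -/
def IsCSemigroup {p : ℕ} (C S : Set (Fin p → ℕ)) : Prop :=
  S ⊆ C ∧ 0 ∈ S ∧ (∀ x ∈ S, ∀ y ∈ S, x + y ∈ S) ∧ (C \ S).Finite

/-- `f` is the Frobenius element of `S`: the `⪯`-maximum of `C \ S`. -/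
def IsFrob {p : ℕ} (O : AdmissibleOrder p) (C S : Set (Fin p → ℕ)) (f : Fin p → ℕ) : Prop :=
  f ∈ C \ S ∧ ∀ x ∈ C \ S, O.le x f

/-- `B(f) = {x ∈ C : f - x ∈ C}`. -/
def BSet {p : ℕ} (C : Set (Fin p → ℕ)) (f : Fin p → ℕ) : Set (Fin p → ℕ) :=
  {x | x ∈ C ∧ ∃ y ∈ C, x + y = f}

/-- `N(f) = #{x ∈ C \ {0} : x ⪯ f}`. -/
noncomputable def NNum {p : ℕ} (O : AdmissibleOrder p) (C : Set (Fin p → ℕ)) (f : Fin p → ℕ) : ℕ :=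
  {x | x ∈ C ∧ x ≠ 0 ∧ O.le x f}.ncard

/-- The genus of `S`: the number of gaps `#(C \ S)`. -/
noncomputable def genusOf {p : ℕ} (C S : Set (Fin p → ℕ)) : ℕ := (C \ S).ncard

/-- The number of small elements `n(S) = #{s ∈ S : s ≺ Fb(S)}`; an element is smaller than
the Frobenius element iff it is strictly smaller than some gap. -/
noncomputable def smallCount {p : ℕ} (O : AdmissibleOrder p) (C S : Set (Fin p → ℕ)) : ℕ :=
  {s | s ∈ S ∧ ∃ h ∈ C \ S, O.lt s h}.ncard

/-- The minimal generating set of `S`. -/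
def msg {p : ℕ} (S : Set (Fin p → ℕ)) : Set (Fin p → ℕ) :=
  (S \ {0}) \ {x | ∃ a ∈ S \ {0}, ∃ b ∈ S \ {0}, a + b = x}

/-- `S` is a `B`-semigroup with respect to `f`. -/
def IsBSemigroup {p : ℕ} (O : AdmissibleOrder p) (C S : Set (Fin p → ℕ)) (f : Fin p → ℕ) : Prop :=
  IsCSemigroup C S ∧ IsFrob O C S f ∧ C \ BSet C f ⊆ S

/-- `a = α(S)`, the `⪯`-minimum of `(S \ {0}) ∩ B(f)`, with the convention `α(S) = f`
when `S ∩ B(f) = {0}`. -/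
def IsAlpha {p : ℕ} (O : AdmissibleOrder p) (C S : Set (Fin p → ℕ)) (f a : Fin p → ℕ) : Prop :=
  (a ∈ S ∧ a ≠ 0 ∧ a ∈ BSet C f ∧ ∀ x ∈ S, x ≠ 0 → x ∈ BSet C f → O.le a x)
  ∨ ((∀ x ∈ S ∩ BSet C f, x = 0) ∧ a = f)

/-- `x` is a special gap of `T`. -/
def SpecialGap {p : ℕ} (C T : Set (Fin p → ℕ)) (x : Fin p → ℕ) : Prop :=
  x ∈ C \ T ∧ x + x ∈ T ∧ ∀ t ∈ T, t ≠ 0 → x + t ∈ T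

/-- `l = λ(S)`, the `⪯`-largest gap of `S` lying outside `B(f)` (no convention case). -/
def IsLambdaGap {p : ℕ} (O : AdmissibleOrder p) (C S : Set (Fin p → ℕ)) (f l : Fin p → ℕ) : Prop :=
  l ∈ C \ S ∧ l ∉ BSet C f ∧ ∀ x ∈ C \ S, x ∉ BSet C f → O.le x l

/-- `l = λ(S)`, with the convention `λ(S) = 0` when `S` has no gap outside `B(f)`. -/
def IsLambda {p : ℕ} (O : AdmissibleOrder p) (C S : Set (Fin p → ℕ)) (f l : Fin p → ℕ) : Prop :=
  IsLambdaGap O C S f l ∨ ((∀ x ∈ C \ S, x ∈ BSet C f) ∧ l = 0)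

/-- `x ≤_C y` iff `y - x ∈ C`. -/
def leC {p : ℕ} (C : Set (Fin p → ℕ)) (x y : Fin p → ℕ) : Prop := ∃ d ∈ C, x + d = y

/-- The ordinary `C`-semigroup `S_c = {0} ∪ {x ∈ C : c ⪯ x}`. -/
def ordinarySemigroup {p : ℕ} (O : AdmissibleOrder p) (C : Set (Fin p → ℕ))
    (c : Fin p → ℕ) : Set (Fin p → ℕ) :=
  insert 0 {x | x ∈ C ∧ O.le c x}

/-- `S` is an arf semigroup in `C`. -/
def ArfSemigroup {p : ℕ} (C S : Set (Fin p → ℕ)) : Prop :=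
  ∀ x ∈ S, ∀ y ∈ S, ∀ z ∈ S, leC C z y → leC C y x →
    ∀ w : Fin p → ℕ, w + z = x + y → w ∈ S

/-- `S` is a saturated semigroup in `C`: whenever `s, s₁, …, s_r ∈ S` with `s_i ≤_C s`,
and `z : Fin r → ℤ` with `z₁s₁ + ⋯ + z_rs_r ∈ C` (as an element `t` of `ℕ^p`),
then `s + z₁s₁ + ⋯ + z_rs_r = s + t ∈ S`. -/
def SaturatedSemigroup {p : ℕ} (C S : Set (Fin p → ℕ)) : Prop :=
  ∀ (r : ℕ) (s : Fin p → ℕ) (si : Fin r → (Fin p → ℕ)) (z : Fin r → ℤ),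
    s ∈ S → (∀ i, si i ∈ S) → (∀ i, leC C (si i) s) →
    ∀ t ∈ C, (∀ j, (t j : ℤ) = ∑ i, z i * (si i j : ℤ)) → s + t ∈ S

lemma finset_max_aux {p : ℕ} (O : AdmissibleOrder p) (t : Finset (Fin p → ℕ))
    (h : t.Nonempty) : ∃ m ∈ t, ∀ x ∈ t, O.le x m := by
  classical
  induction t using Finset.induction_on with
  | empty => simp at h
  | @insert a s ha ih =>
    rcases s.eq_empty_or_nonempty with rfl | hs
    · refine ⟨a, by simp, ?_⟩
      intro x hx
      simp only [Finset.mem_insert, Finset.notMem_empty, or_false] at hx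
      subst hx; exact O.le_refl x
    · obtain ⟨m, hm, hmax⟩ := ih hs
      rcases O.le_total a m with h1 | h1
      · refine ⟨m, Finset.mem_insert_of_mem hm, ?_⟩
        intro x hx
        rcases Finset.mem_insert.1 hx with rfl | hx
        · exact h1
        · exact hmax x hx
      · refine ⟨a, Finset.mem_insert_self _ _, ?_⟩
        intro x hx
        rcases Finset.mem_insert.1 hx with rfl | hx
        · exact O.le_refl x
        · exact O.le_trans _ _ _ (hmax x hx) h1

lemma set_max_aux {p : ℕ} (O : AdmissibleOrder p) {T : Set (Fin p → ℕ)}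
    (hfin : T.Finite) (hne : T.Nonempty) : ∃ m ∈ T, ∀ x ∈ T, O.le x m := by
  obtain ⟨m, hm, hmax⟩ := finset_max_aux O hfin.toFinset (by simpa using hne)
  exact ⟨m, hfin.mem_toFinset.1 hm, fun x hx => hmax x (hfin.mem_toFinset.2 hx)⟩

lemma NNum_lt_aux {p : ℕ} (O : AdmissibleOrder p) (C : Set (Fin p → ℕ)) {a b : Fin p → ℕ}
    (hb : b ∈ C) (hb0 : b ≠ 0) (hab : O.le a b) (hne : a ≠ b) :
    NNum O C a < NNum O C b := by
  apply Set.ncard_lt_ncard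
  · constructor
    · intro x hx
      exact ⟨hx.1, hx.2.1, O.le_trans _ _ _ hx.2.2 hab⟩
    · intro hsub
      have hb' : b ∈ {x | x ∈ C ∧ x ≠ 0 ∧ O.le x b} := ⟨hb, hb0, O.le_refl b⟩
      have := (hsub hb').2.2
      exact hne (O.le_antisymm _ _ hab this)
  · exact (O.finite_le b).subset (fun x hx => hx.2.2)

lemma NNum_inj_aux {p : ℕ} (O : AdmissibleOrder p) (C : Set (Fin p → ℕ)) {f₁ f₂ : Fin p → ℕ}
    (h1 : f₁ ∈ C) (h10 : f₁ ≠ 0) (h2 : f₂ ∈ C) (h20 : f₂ ≠ 0)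
    (hN : NNum O C f₁ = NNum O C f₂) : f₁ = f₂ := by
  by_contra hne
  rcases O.le_total f₁ f₂ with h | h
  · exact absurd hN (Nat.ne_of_lt (NNum_lt_aux O C h2 h20 h hne))
  · exact absurd hN.symm (Nat.ne_of_lt (NNum_lt_aux O C h1 h10 h (Ne.symm hne)))

lemma key_count_aux {p : ℕ} (O : AdmissibleOrder p) (C S : Set (Fin p → ℕ))
    (hS : IsCSemigroup C S) (F : Fin p → ℕ) (hF : IsFrob O C S F) :
    genusOf C S + smallCount O C S = NNum O C F + 1 := by
  obtain ⟨hSC, h0, hadd, hfin⟩ := hS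
  obtain ⟨⟨hFC, hFS⟩, hFmax⟩ := hF
  have hF0 : F ≠ 0 := fun h => hFS (h ▸ h0)
  set T : Set (Fin p → ℕ) := {s | s ∈ S ∧ s ≠ 0 ∧ O.lt s F} with hT
  have hTfin : T.Finite := (O.finite_le F).subset (fun x hx => hx.2.2.1)
  have hsmall : {s | s ∈ S ∧ ∃ h ∈ C \ S, O.lt s h} = insert 0 T := by
    ext s
    constructor
    · rintro ⟨hsS, h, hhCS, hlt⟩
      by_cases hs0 : s = 0
      · exact Or.inl hs0
      · refine Or.inr ⟨hsS, hs0, O.le_trans _ _ _ hlt.1 (hFmax h hhCS), ?_⟩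
        rintro rfl; exact hFS hsS
    · rintro (rfl | ⟨hsS, hs0, hlt⟩)
      · exact ⟨h0, F, ⟨hFC, hFS⟩, O.zero_le F, Ne.symm hF0⟩
      · exact ⟨hsS, F, ⟨hFC, hFS⟩, hlt⟩
  have hN : {x | x ∈ C ∧ x ≠ 0 ∧ O.le x F} = (C \ S) ∪ T := by
    ext x
    constructor
    · rintro ⟨hxC, hx0, hxF⟩
      by_cases hxS : x ∈ S
      · refine Or.inr ⟨hxS, hx0, hxF, ?_⟩
        rintro rfl; exact hFS hxS
      · exact Or.inl ⟨hxC, hxS⟩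
    · rintro (⟨hxC, hxS⟩ | ⟨hxS, hx0, hxF, _⟩)
      · refine ⟨hxC, ?_, hFmax x ⟨hxC, hxS⟩⟩
        rintro rfl; exact hxS h0
      · exact ⟨hSC hxS, hx0, hxF⟩
  have hdisj : Disjoint (C \ S) T := by
    rw [Set.disjoint_left]
    rintro x ⟨_, hxS⟩ ⟨hxS', _⟩
    exact hxS hxS'
  have h0T : (0 : Fin p → ℕ) ∉ T := fun h => h.2.1 rfl
  have hNN : NNum O C F = (C \ S).ncard + T.ncard := by
    rw [NNum, hN, Set.ncard_union_eq hdisj hfin hTfin]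
  have hsc : smallCount O C S = T.ncard + 1 := by
    rw [smallCount, hsmall, Set.ncard_insert_of_notMem h0T hTfin]
  rw [genusOf, hsc, hNN]
  ring

/-- If N(f) = g + n - 1 then a C-semigroup S satisfies g(S) = g and n(S) = n iff
Fb(S) = f and g(S) = g. -/
theorem statement3 (p : ℕ) (hp : 0 < p) (C : Set (Fin p → ℕ)) (hC : IsIntegerCone p C)
    (O : AdmissibleOrder p) (g n : ℕ) (hg : 0 < g) (hn : 0 < n)
    (f : Fin p → ℕ) (hfC : f ∈ C) (hf0 : f ≠ 0)
    (hNf : NNum O C f = g + n - 1)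
    (S : Set (Fin p → ℕ)) (hS : IsCSemigroup C S) :
    (genusOf C S = g ∧ smallCount O C S = n) ↔ (IsFrob O C S f ∧ genusOf C S = g) := by
  have hfin : (C \ S).Finite := hS.2.2.2
  constructor
  · rintro ⟨hgen, hsc⟩
    have hne : (C \ S).Nonempty := by
      rw [Set.nonempty_iff_ne_empty]
      intro h
      rw [genusOf, h, Set.ncard_empty] at hgen
      omega
    obtain ⟨F, hFmem, hFmax⟩ := set_max_aux O hfin hne
    have hFrob : IsFrob O C S F := ⟨hFmem, hFmax⟩
    have hkey := key_count_aux O C S hS F hFrob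
    rw [hgen, hsc] at hkey
    have hNF : NNum O C F = NNum O C f := by omega
    have hF0 : F ≠ 0 := by rintro rfl; exact hFmem.2 hS.2.1
    have := NNum_inj_aux O C hFmem.1 hF0 hfC hf0 hNF
    rw [this] at hFrob
    exact ⟨hFrob, hgen⟩
  · rintro ⟨hFrob, hgen⟩
    have hkey := key_count_aux O C S hS f hFrob
    rw [hgen, hNf] at hkey
    exact ⟨hgen, by omega⟩
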